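/- Let ζ ∈ ℚ̄ be a root of unity with ζ ≠ 1 and ζ ≠ -1, and let w ∈ ℚ̄ satisfy w² = ζ(ζ-1)(ζ-ζ²). Then (ζ, w) is a torsion point of the elliptic curve E over ℚ(ζ) defined by the equation Y² = X(X-1)(X-ζ²); moreover its coordinates ζ and w are multiplicatively dependent. -/

import Mathlib

open WeierstrassCurve WeierstrassCurve.Affine

open Classical in
/-- Let `ζ ≠ ±1` be a root of unity and `w` a square root of `ζ(ζ-1)(ζ-ζ²)`. Then the equation
`Y² = X(X-1)(X-ζ²)`, i.e. `Y² = X³ - (1+ζ²)X² + ζ²X`, defines an elliptic curve `E` over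
`ℚ(ζ)` (its discriminant is nonzero), the point `(ζ, w)` is a torsion point of `E(ℚ̄)`, and its
coordinates `ζ` and `w` are multiplicatively dependent. -/
theorem stoll_point_is_torsion_with_mult_dep_coords
    (ζ w : AlgebraicClosure ℚ) (hζ : ∃ m : ℕ, 0 < m ∧ ζ ^ m = 1)
    (hζ1 : ζ ≠ 1) (hζ2 : ζ ≠ -1)
    (hw : w ^ 2 = ζ * (ζ - 1) * (ζ - ζ ^ 2)) :
    ∀ z : IntermediateField.adjoin ℚ ({ζ} : Set (AlgebraicClosure ℚ)),
      (z : AlgebraicClosure ℚ) = ζ →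
    ∀ W : WeierstrassCurve (IntermediateField.adjoin ℚ ({ζ} : Set (AlgebraicClosure ℚ))),
      W = ⟨0, -(1 + z ^ 2), 0, z ^ 2, 0⟩ →
      W.Δ ≠ 0 ∧
      ∃ h : (W.baseChange (AlgebraicClosure ℚ)).toAffine.Nonsingular ζ w,
        IsOfFinAddOrder (Point.some ζ w h : (W.baseChange (AlgebraicClosure ℚ)).toAffine.Point) ∧
        ∃ a b : ℤ, (a, b) ≠ (0, 0) ∧ ζ ^ a * w ^ b = 1 := by
  obtain ⟨m, hm, hζm⟩ := hζ
  have hζ0 : ζ ≠ 0 := by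
    rintro rfl
    rw [zero_pow hm.ne'] at hζm
    exact zero_ne_one hζm
  have hζm1 : ζ - 1 ≠ 0 := sub_ne_zero.2 hζ1
  have hζp1 : ζ + 1 ≠ 0 := fun h => hζ2 (by linear_combination h)
  have hw2 : w ^ 2 = -(ζ ^ 2 * (ζ - 1) ^ 2) := by linear_combination hw
  have hw0 : w ≠ 0 := by
    intro h
    rw [h] at hw2
    have := mul_ne_zero (pow_ne_zero 2 hζ0) (pow_ne_zero 2 hζm1)
    exact this (by linear_combination hw2)
  intro z hz W hW
  subst hW
  set W' := (WeierstrassCurve.baseChange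
    (⟨0, -(1 + z ^ 2), 0, z ^ 2, 0⟩ :
      WeierstrassCurve (IntermediateField.adjoin ℚ ({ζ} : Set (AlgebraicClosure ℚ))))
    (AlgebraicClosure ℚ)) with hW'
  have ha1 : W'.a₁ = 0 := by simp [hW', WeierstrassCurve.map]
  have ha2 : W'.a₂ = -(1 + ζ ^ 2) := by
    simp only [hW', WeierstrassCurve.baseChange, WeierstrassCurve.map, IntermediateField.algebraMap_apply]
    push_cast
    rw [hz]
  have ha3 : W'.a₃ = 0 := by simp [hW', WeierstrassCurve.map]
  have ha4 : W'.a₄ = ζ ^ 2 := by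
    simp only [hW', WeierstrassCurve.baseChange, WeierstrassCurve.map, IntermediateField.algebraMap_apply]
    push_cast
    rw [hz]
  have ha6 : W'.a₆ = 0 := by simp [hW', WeierstrassCurve.map]
  -- discriminant of base change is nonzero
  have hΔK : W'.Δ ≠ 0 := by
    rw [WeierstrassCurve.Δ, WeierstrassCurve.b₂, WeierstrassCurve.b₄, WeierstrassCurve.b₆,
      WeierstrassCurve.b₈, ha1, ha2, ha3, ha4, ha6]
    have : -(0 ^ 2 + 4 * -(1 + ζ ^ 2)) ^ 2 * (0 ^ 2 * 0 + 4 * -(1 + ζ ^ 2) * 0 -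
        0 * 0 * ζ ^ 2 + -(1 + ζ ^ 2) * 0 ^ 2 - (ζ ^ 2) ^ 2) -
        8 * (2 * ζ ^ 2 + 0 * 0) ^ 3 - 27 * (0 ^ 2 + 4 * 0) ^ 2 +
        9 * (0 ^ 2 + 4 * -(1 + ζ ^ 2)) * (2 * ζ ^ 2 + 0 * 0) * (0 ^ 2 + 4 * 0) =
        16 * ζ ^ 4 * (ζ - 1) ^ 2 * (ζ + 1) ^ 2 := by ring
    rw [this]
    exact mul_ne_zero (mul_ne_zero (mul_ne_zero (by norm_num) (pow_ne_zero 4 hζ0))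
      (pow_ne_zero 2 hζm1)) (pow_ne_zero 2 hζp1)
  have hΔ : (⟨0, -(1 + z ^ 2), 0, z ^ 2, 0⟩ : WeierstrassCurve (IntermediateField.adjoin ℚ ({ζ} : Set (AlgebraicClosure ℚ)))).Δ ≠ 0 := by
    intro h0
    apply hΔK
    rw [hW', WeierstrassCurve.baseChange, WeierstrassCurve.map_Δ, h0, map_zero]
  refine ⟨hΔ, ?_⟩
  -- the point is nonsingular
  have heq : W'.toAffine.Equation ζ w := by
    rw [Affine.equation_iff, ha1, ha2, ha3, ha4, ha6]
    linear_combination hw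
  have h : W'.toAffine.Nonsingular ζ w := (Affine.equation_iff_nonsingular_of_Δ_ne_zero (W := W'.toAffine) hΔK).mp heq
  refine ⟨h, ?_, ⟨(m : ℤ), 0, by simp [hm.ne'], by
    rw [zpow_natCast, zpow_zero, mul_one, hζm]⟩⟩
  -- torsion of order dividing 4
  have hnegY : W'.toAffine.negY ζ w = -w := by
    rw [Affine.negY, ha1, ha3]; ring
  have hne : w ≠ W'.toAffine.negY ζ w := by
    rw [hnegY]
    intro hcon
    apply hw0
    have h2 : w + w = 0 := by linear_combination hcon
    have : (2 : AlgebraicClosure ℚ) * w = 0 := by linear_combination h2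
    rcases mul_eq_zero.1 this with h | h
    · exact absurd h (by norm_num)
    · exact h
  have hL : W'.toAffine.slope ζ ζ w w =
      (3 * ζ ^ 2 + 2 * W'.a₂ * ζ + W'.a₄ - W'.a₁ * w) / (w - W'.toAffine.negY ζ w) :=
    Affine.slope_of_Y_ne rfl hne
  have hLval : W'.toAffine.slope ζ ζ w w = (-2 * ζ ^ 3 + 4 * ζ ^ 2 - 2 * ζ) / (2 * w) := by
    rw [hL, ha1, ha2, ha4, hnegY]
    congr 1 <;> ring
  have h2w : (2 : AlgebraicClosure ℚ) * w ≠ 0 := mul_ne_zero (by norm_num) hw0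
  have hx2 : W'.toAffine.addX ζ ζ (W'.toAffine.slope ζ ζ w w) = 0 := by
    rw [Affine.addX, hLval, ha1, ha2]
    field_simp
    linear_combination (4 * ζ ^ 2 - 8 * ζ + 4) * hw2
  have hy2 : W'.toAffine.addY ζ ζ w (W'.toAffine.slope ζ ζ w w) = 0 := by
    rw [Affine.addY, Affine.negY, Affine.negAddY, hx2, ha1, ha3, hLval]
    field_simp
    linear_combination (-2 : AlgebraicClosure ℚ) * hw2
  -- helper: the point (0,0) is 2-torsion
  have key : ∀ (x y : AlgebraicClosure ℚ), x = 0 → y = 0 → ∀ h' : W'.toAffine.Nonsingular x y,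
      (Point.some _ _ h' + Point.some _ _ h' : W'.toAffine.Point) = 0 := by
    rintro x y rfl rfl h'
    exact Point.add_self_of_Y_eq (by rw [Affine.negY, ha1, ha3]; ring)
  have h4 : (4 : ℕ) • (Point.some _ _ h : W'.toAffine.Point) = 0 := by
    have hPP : (Point.some _ _ h + Point.some _ _ h : W'.toAffine.Point) =
        Point.some _ _ (Affine.nonsingular_add h h fun hxy => hne hxy.right) :=
      Point.add_self_of_Y_ne hne
    have : (4 : ℕ) • (Point.some _ _ h : W'.toAffine.Point) =
        (Point.some _ _ h + Point.some _ _ h) + (Point.some _ _ h + Point.some _ _ h) := by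
      rw [show (4 : ℕ) = 2 + 2 from rfl, add_nsmul, two_nsmul]
    rw [this, hPP]
    exact key _ _ hx2 hy2 _
  exact isOfFinAddOrder_iff_nsmul_eq_zero.2 ⟨4, by norm_num, h4⟩
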